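/- Let 𝒫 : Set (Set ℝ) be a family of compact subsets of ℝ with {0} ∉ 𝒫, and let κ be a cardinal. Then the set {f ∈ C(βℕ∖ℕ, ℝ) | Set.range f ∈ 𝒫} is κ-lineable in C(βℕ∖ℕ, ℝ) if and only if the set {x ∈ ℓ∞ | Lim(x) ∈ 𝒫} is κ-lineable in ℓ∞. -/

import Mathlib

open scoped ENNReal

/-- The remainder `βℕ∖ℕ` of the Stone–Čech compactification of `ℕ`: the set of nonprincipal
ultrafilters on `ℕ`, as a subspace of `Ultrafilter ℕ`. -/
def betaNRemainder : Set (Ultrafilter ℕ) := (Set.range (pure : ℕ → Ultrafilter ℕ))ᶜ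

lemma isOpen_range_pure : IsOpen (Set.range (pure : ℕ → Ultrafilter ℕ)) := by
  have h : Set.range (pure : ℕ → Ultrafilter ℕ)
      = ⋃ n : ℕ, {u : Ultrafilter ℕ | ({n} : Set ℕ) ∈ u} := by
    ext u
    simp only [Set.mem_range, Set.mem_iUnion, Set.mem_setOf_eq]
    constructor
    · rintro ⟨n, rfl⟩
      exact ⟨n, by simp⟩
    · rintro ⟨n, hn⟩
      obtain ⟨x, hx, rfl⟩ := Ultrafilter.eq_pure_of_finite_mem (Set.finite_singleton n) hn
      exact ⟨x, rfl⟩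
  rw [h]
  exact isOpen_iUnion fun n => ultrafilter_isOpen_basic _

instance : CompactSpace ↥betaNRemainder := by
  rw [← isCompact_iff_compactSpace]
  exact isOpen_range_pure.isClosed_compl.isCompact

/-- The set of cluster points of a bounded sequence `x ∈ ℓ∞`. -/
def LimSet (x : lp (fun _ : ℕ => ℝ) ∞) : Set ℝ :=
  {t : ℝ | ∀ ε > (0 : ℝ), {n : ℕ | |x n - t| < ε}.Infinite}

/-- A subset `M` of a real normed space `X` is `κ`-lineable if `M ∪ {0}` contains a linear
subspace of dimension `κ`. -/
def Lineable {X : Type} [NormedAddCommGroup X] [NormedSpace ℝ X]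
    (M : Set X) (κ : Cardinal) : Prop :=
  ∃ V : Submodule ℝ X, Module.rank ℝ ↥V = κ ∧ (V : Set X) ⊆ M ∪ {0}

open Filter Topology

/-- The limit of a sequence along an ultrafilter. -/
noncomputable def Tval (x : ℕ → ℝ) (u : Ultrafilter ℕ) : ℝ := limUnder (u : Filter ℕ) x

lemma tendsto_Tval (x : lp (fun _ : ℕ => ℝ) ∞) (u : Ultrafilter ℕ) :
    Tendsto (⇑x) ↑u (𝓝 (Tval (⇑x) u)) := by
  apply tendsto_nhds_limUnder
  have hb : ∀ n, x n ∈ Set.Icc (-‖x‖) ‖x‖ := by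
    intro n
    have := lp.norm_apply_le_norm ENNReal.top_ne_zero x n
    rw [Real.norm_eq_abs, abs_le] at this
    exact ⟨this.1, this.2⟩
  obtain ⟨t, -, ht⟩ := isCompact_Icc.ultrafilter_le_nhds (u.map x)
    (by rw [le_principal_iff]; exact Filter.mem_map.2 (Filter.Eventually.of_forall hb))
  exact ⟨t, ht⟩

lemma continuous_Tval (x : lp (fun _ : ℕ => ℝ) ∞) : Continuous (Tval (⇑x)) := by
  have h0 : (0 : ℝ) ∈ Set.Icc (-‖x‖) ‖x‖ := by
    exact ⟨neg_nonpos.2 (norm_nonneg _), norm_nonneg _⟩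
  haveI : Nonempty (Set.Icc (-‖x‖) ‖x‖) := ⟨⟨0, h0⟩⟩
  haveI : CompactSpace (Set.Icc (-‖x‖) ‖x‖) := isCompact_iff_compactSpace.mp isCompact_Icc
  have hb : ∀ n, x n ∈ Set.Icc (-‖x‖) ‖x‖ := by
    intro n
    have := lp.norm_apply_le_norm ENNReal.top_ne_zero x n
    rw [Real.norm_eq_abs, abs_le] at this
    exact ⟨this.1, this.2⟩
  set g : ℕ → Set.Icc (-‖x‖) ‖x‖ := fun n => ⟨x n, hb n⟩ with hg
  have key : Tval (⇑x) = fun u => (Ultrafilter.extend g u).val := by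
    funext u
    have h1 : Tendsto g ↑u (𝓝 (Ultrafilter.extend g u)) :=
      ultrafilter_extend_eq_iff.mp rfl
    have h2 : Tendsto (⇑x) ↑u (𝓝 ((Ultrafilter.extend g u).val)) :=
      (continuous_subtype_val.tendsto _).comp h1
    exact h2.limUnder_eq
  rw [key]
  exact continuous_subtype_val.comp (continuous_ultrafilter_extend g)

/-- The linear map from `ℓ∞` to `C(βℕ∖ℕ, ℝ)` sending a bounded sequence to the function
assigning to each nonprincipal ultrafilter the limit along it. -/
noncomputable def Tlin : lp (fun _ : ℕ => ℝ) ∞ →ₗ[ℝ] C(↥betaNRemainder, ℝ) where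
  toFun x := ⟨fun u => Tval (⇑x) u.val, (continuous_Tval x).comp continuous_subtype_val⟩
  map_add' x y := by
    ext u
    have h : Tendsto (⇑(x + y)) ↑u.val (𝓝 (Tval (⇑x) u.val + Tval (⇑y) u.val)) := by
      rw [lp.coeFn_add]
      exact (tendsto_Tval x u.val).add (tendsto_Tval y u.val)
    exact h.limUnder_eq
  map_smul' c x := by
    ext u
    have h : Tendsto (⇑(c • x)) ↑u.val (𝓝 (c • Tval (⇑x) u.val)) := by
      rw [lp.coeFn_smul]
      exact (tendsto_Tval x u.val).const_smul c
    exact h.limUnder_eq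

lemma mem_LimSet_of_remainder (x : lp (fun _ : ℕ => ℝ) ∞) (u : Ultrafilter ℕ)
    (hu : u ∈ betaNRemainder) : Tval (⇑x) u ∈ LimSet x := by
  intro ε hε
  have hmem : {n : ℕ | |x n - Tval (⇑x) u| < ε} ∈ u := by
    have h1 := tendsto_Tval x u
    have h2 : {y : ℝ | |y - Tval (⇑x) u| < ε} ∈ 𝓝 (Tval (⇑x) u) := by
      have h3 : Metric.ball (Tval (⇑x) u) ε ∈ 𝓝 (Tval (⇑x) u) := Metric.ball_mem_nhds _ hε
      simpa [Metric.ball, Real.dist_eq] using h3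
    exact h1 h2
  by_contra hfin
  rw [Set.not_infinite] at hfin
  obtain ⟨a, -, ha⟩ := Ultrafilter.eq_pure_of_finite_mem hfin hmem
  exact hu ⟨a, ha.symm⟩

lemma exists_remainder_of_mem_LimSet (x : lp (fun _ : ℕ => ℝ) ∞) (t : ℝ)
    (ht : t ∈ LimSet x) :
    ∃ u : Ultrafilter ℕ, u ∈ betaNRemainder ∧ Tval (⇑x) u = t := by
  have hne : Filter.NeBot (Filter.comap (⇑x) (𝓝 t) ⊓ Filter.cofinite) := by
    rw [Filter.inf_neBot_iff]
    intro s hs s' hs'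
    obtain ⟨U, hU, hUs⟩ := hs
    obtain ⟨ε, hε, hball⟩ := Metric.mem_nhds_iff.mp hU
    have hinf : {n : ℕ | |x n - t| < ε}.Infinite := ht ε hε
    have hsub : {n : ℕ | |x n - t| < ε} ⊆ s := fun n hn =>
      hUs (hball (by simpa [Real.dist_eq] using hn))
    rw [Filter.mem_cofinite] at hs'
    have hinf2 : ({n : ℕ | |x n - t| < ε} \ s'ᶜ).Infinite := hinf.diff hs'
    obtain ⟨n, hn1, hn2⟩ := hinf2.nonempty
    exact ⟨n, hsub hn1, not_not.mp hn2⟩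
  set u := Ultrafilter.of (Filter.comap (⇑x) (𝓝 t) ⊓ Filter.cofinite) with hu
  have hle := Ultrafilter.of_le (Filter.comap (⇑x) (𝓝 t) ⊓ Filter.cofinite)
  refine ⟨u, ?_, ?_⟩
  · rintro ⟨a, ha⟩
    have hcof : (u : Filter ℕ) ≤ Filter.cofinite := hle.trans inf_le_right
    have h1 : ({a} : Set ℕ)ᶜ ∈ u := hcof (by rw [Filter.mem_cofinite]; simp)
    rw [Ultrafilter.compl_mem_iff_notMem] at h1
    exact h1 (by rw [← ha]; exact Filter.mem_pure.2 rfl)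
  · have h2 : Tendsto (⇑x) ↑u (𝓝 t) :=
      Filter.map_le_iff_le_comap.mpr (hle.trans inf_le_left)
    exact h2.limUnder_eq

lemma range_Tlin (x : lp (fun _ : ℕ => ℝ) ∞) :
    Set.range ⇑(Tlin x) = LimSet x := by
  ext t
  constructor
  · rintro ⟨u, rfl⟩
    exact mem_LimSet_of_remainder x u.val u.property
  · intro ht
    obtain ⟨u, hu, hut⟩ := exists_remainder_of_mem_LimSet x t ht
    exact ⟨⟨u, hu⟩, hut⟩

lemma Tlin_surjective : Function.Surjective Tlin := by
  intro f
  obtain ⟨h, hh⟩ := ContinuousMap.exists_restrict_eq (Y := ℝ)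
    isOpen_range_pure.isClosed_compl f
  have hmem : Memℓp (fun n => h (pure n)) ∞ := by
    apply memℓp_infty
    refine ⟨‖h‖, ?_⟩
    rintro - ⟨n, rfl⟩
    exact h.norm_coe_le_norm (pure n)
  refine ⟨⟨fun n => h (pure n), hmem⟩, ?_⟩
  ext u
  show Tval (fun n => h (pure n)) u.val = f u
  have h1 : Tendsto (fun n => h (pure n)) ↑u.val (𝓝 (h u.val)) :=
    (h.continuous.tendsto u.val).comp (Ultrafilter.tendsto_pure_self u.val)
  have h2 : Tval (fun n => h (pure n)) u.val = h u.val := h1.limUnder_eq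
  rw [h2]
  exact congrFun (congrArg (fun g : C(↥betaNRemainder, ℝ) => ⇑g) hh) u

instance : Nonempty ↥betaNRemainder := by
  refine ⟨⟨(Filter.hyperfilter ℕ : Ultrafilter ℕ), ?_⟩⟩
  rintro ⟨a, ha⟩
  have h1 : ({a} : Set ℕ) ∈ Filter.hyperfilter ℕ := by
    rw [← ha]; exact Filter.mem_pure.2 rfl
  exact Filter.notMem_hyperfilter_of_finite (Set.finite_singleton a) h1

/-- For a family `𝒫` of compact subsets of `ℝ` with `{0} ∉ 𝒫` and a cardinal
`κ`, the set of `f ∈ C(βℕ∖ℕ, ℝ)` with `range f ∈ 𝒫` is `κ`-lineable iff the set of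
`x ∈ ℓ∞` with `Lim(x) ∈ 𝒫` is `κ`-lineable. -/
theorem stmt14 (Pfam : Set (Set ℝ)) (hPcompact : ∀ P ∈ Pfam, IsCompact P)
    (h0 : ({0} : Set ℝ) ∉ Pfam) (κ : Cardinal) :
    Lineable {f : C(↥betaNRemainder, ℝ) | Set.range f ∈ Pfam} κ ↔
      Lineable {x : lp (fun _ : ℕ => ℝ) ∞ | LimSet x ∈ Pfam} κ := by
  constructor
  · -- C(βℕ∖ℕ) lineable → ℓ∞ lineable
    rintro ⟨V, hrank, hsub⟩
    obtain ⟨S, hS⟩ :=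
      Tlin.exists_rightInverse_of_surjective (LinearMap.range_eq_top.2 Tlin_surjective)
    have hTS : ∀ f, Tlin (S f) = f := fun f => by
      simpa using LinearMap.congr_fun hS f
    have hSinj : Function.Injective S := Function.LeftInverse.injective hTS
    refine ⟨V.map S, ?_, ?_⟩
    · rw [← hrank]
      exact ((Submodule.equivMapOfInjective S hSinj V).rank_eq).symm
    · intro y hy
      obtain ⟨f, hfV, rfl⟩ := Submodule.mem_map.mp hy
      by_cases hf : f = 0
      · right; simp [hf]
      · left
        have hfM : Set.range ⇑f ∈ Pfam :=
          (hsub hfV).resolve_right (by simpa using hf)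
        show LimSet (S f) ∈ Pfam
        rw [← range_Tlin (S f), hTS f]
        exact hfM
  · -- ℓ∞ lineable → C(βℕ∖ℕ) lineable
    rintro ⟨V, hrank, hsub⟩
    have hker : ∀ x ∈ V, Tlin x = 0 → x = 0 := by
      intro x hxV hx0
      by_contra hx
      have hxM : LimSet x ∈ Pfam :=
        (hsub hxV).resolve_right (by simpa using hx)
      have hL : LimSet x = {0} := by
        rw [← range_Tlin x, hx0]
        simp
      exact h0 (hL ▸ hxM)
    have hinj : Function.Injective (Tlin ∘ₗ V.subtype) := by
      intro a b hab
      have h1 : Tlin ((a : lp (fun _ : ℕ => ℝ) ∞) - b) = 0 := by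
        rw [map_sub, sub_eq_zero]
        exact hab
      have h2 : (a : lp (fun _ : ℕ => ℝ) ∞) - b ∈ V := V.sub_mem a.2 b.2
      have h3 := hker _ h2 h1
      exact Subtype.ext (sub_eq_zero.mp h3)
    refine ⟨V.map Tlin, ?_, ?_⟩
    · rw [← hrank]
      have h2 : LinearMap.range (Tlin ∘ₗ V.subtype) = V.map Tlin := by
        rw [LinearMap.range_comp, Submodule.range_subtype]
      have e1 := LinearEquiv.ofInjective (Tlin ∘ₗ V.subtype) hinj
      rw [← h2]
      exact e1.rank_eq.symm
    · intro g hg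
      obtain ⟨x, hxV, rfl⟩ := Submodule.mem_map.mp hg
      by_cases hx : x = 0
      · right; simp [hx]
      · left
        have hxM : LimSet x ∈ Pfam :=
          (hsub hxV).resolve_right (by simpa using hx)
        show Set.range ⇑(Tlin x) ∈ Pfam
        rw [range_Tlin]
        exact hxM
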